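/- An operator T : C(X) → C(X) is an order preserving involution (T(T(f)) = f for all f, and f ≤ g implies T(f) ≤ T(g)) if and only if there exist c ∈ X, w ∈ X* and a continuous linear automorphism E of X with E² = I_X, Ec = −c, E*w = −w, such that T(f)(x) = f(Ex + c) + ⟨w, x⟩ − ½⟨c, w⟩ for all f ∈ C(X), x ∈ X. -/

import Mathlib

open Set Filter Topology

noncomputable section

variable {X : Type*}

/-- The class of proper, lower semicontinuous, convex functions `X → ℝ ∪ {+∞}`,
encoded as `EReal`-valued functions never taking the value `⊥`. -/
def IsClFun (X : Type*) [NormedAddCommGroup X] [NormedSpace ℝ X] (f : X → EReal) : Prop :=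
  (∀ x, f x ≠ ⊥) ∧ (∃ x, f x ≠ ⊤) ∧ LowerSemicontinuous f ∧
  ∀ x y : X, ∀ a b : ℝ, 0 ≤ a → 0 ≤ b → a + b = 1 →
    f (a • x + b • y) ≤ (a : EReal) * f x + (b : EReal) * f y

/-- `C(X)`, as a subtype. -/
abbrev Cl (X : Type*) [NormedAddCommGroup X] [NormedSpace ℝ X] :=
  {f : X → EReal // IsClFun X f}

/-- The continuous affine function `h_{u,α}(x) = ⟨u,x⟩ + α`. -/
def aff [NormedAddCommGroup X] [NormedSpace ℝ X] (u : X →L[ℝ] ℝ) (α : ℝ) : X → EReal :=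
  fun x => ((u x + α : ℝ) : EReal)

theorem affMem [NormedAddCommGroup X] [NormedSpace ℝ X] (u : X →L[ℝ] ℝ) (α : ℝ) :
    IsClFun X (aff u α) := by
  refine ⟨fun x => EReal.coe_ne_bot _, ⟨0, EReal.coe_ne_top _⟩, ?_, ?_⟩
  · exact (continuous_coe_real_ereal.comp (by continuity)).lowerSemicontinuous
  · intro x y a b ha hb hab
    simp only [aff, map_add, map_smul, smul_eq_mul]
    rw [← EReal.coe_mul, ← EReal.coe_mul, ← EReal.coe_add, EReal.coe_le_coe_iff]
    have h : a * α + b * α = α := by rw [← add_mul, hab, one_mul]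
    nlinarith

/-- `h_{u,α}` as an element of `C(X)`. -/
def affCl [NormedAddCommGroup X] [NormedSpace ℝ X] (u : X →L[ℝ] ℝ) (α : ℝ) : Cl X :=
  ⟨aff u α, affMem u α⟩

section Aux
variable [NormedAddCommGroup X] [NormedSpace ℝ X]


lemma ereal_add_sub_cancel (z : EReal) (c : ℝ) : z + (c:EReal) - (c:EReal) = z := by
  induction z using EReal.rec with
  | bot => simp
  | coe a => norm_cast; ring
  | top => simp [EReal.top_sub_coe]

lemma ereal_sub_add_cancel (z : EReal) (c : ℝ) : z - (c:EReal) + (c:EReal) = z := by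
  induction z using EReal.rec with
  | bot => simp
  | coe a => norm_cast; ring
  | top => simp [EReal.top_sub_coe]

/-- Adding a real constant as an order isomorphism of `EReal`. -/
def addIso (c : ℝ) : EReal ≃o EReal where
  toFun z := z + (c : EReal)
  invFun z := z - (c : EReal)
  left_inv z := ereal_add_sub_cancel z c
  right_inv z := ereal_sub_add_cancel z c
  map_rel_iff' := by
    intro a b
    constructor
    · intro h
      have h2 : a + (c:EReal) - (c:EReal) ≤ b + (c:EReal) - (c:EReal) := by
        apply EReal.sub_le_sub h (le_refl _)
      rwa [ereal_add_sub_cancel, ereal_add_sub_cancel] at h2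
    · intro h; exact add_le_add_left h _

lemma ereal_iSup_add {ι : Sort*} (g : ι → ℝ) (c : ℝ) :
    (⨆ i, ((g i + c : ℝ) : EReal)) = (⨆ i, ((g i : ℝ) : EReal)) + (c : EReal) := by
  have h := (addIso c).map_iSup (fun i => ((g i : ℝ) : EReal))
  have h2 : ∀ i, addIso c ((g i : ℝ) : EReal) = ((g i + c : ℝ) : EReal) := by
    intro i; show ((g i : ℝ) : EReal) + (c:EReal) = _; rw [← EReal.coe_add]
  have h3 : addIso c (⨆ i, ((g i : ℝ) : EReal)) = (⨆ i, ((g i : ℝ) : EReal)) + (c:EReal) := rfl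
  rw [← h3, h]
  exact iSup_congr h2

lemma aff_le_aff_iff {u u' : X →L[ℝ] ℝ} {α α' : ℝ} :
    (∀ x, aff u α x ≤ aff u' α' x) ↔ u = u' ∧ α ≤ α' := by
  constructor
  · intro h
    have hr : ∀ x, u x + α ≤ u' x + α' := fun x => EReal.coe_le_coe_iff.1 (h x)
    have key : ∀ x, u x = u' x := by
      intro x
      by_contra hne
      have hd : u x - u' x ≠ 0 := sub_ne_zero.2 hne
      have h2 : ∀ t : ℝ, t * (u x - u' x) ≤ α' - α := by
        intro t
        have := hr (t • x)
        simp only [map_smul, smul_eq_mul] at this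
        nlinarith [this]
      have := h2 ((α' - α + 1)/(u x - u' x))
      rw [div_mul_cancel₀ _ hd] at this; linarith
    refine ⟨ContinuousLinearMap.ext key, ?_⟩
    have := hr 0; simpa using this
  · rintro ⟨rfl, h⟩ x
    exact EReal.coe_le_coe_iff.2 (by linarith)



/-- Any `g ∈ C(X)` lying below a continuous affine function is affine with the same
linear part. -/
lemma le_aff (g : Cl X) (u : X →L[ℝ] ℝ) (α : ℝ) (h : ∀ x, g.1 x ≤ aff u α x) :
    ∃ c ≤ α, g.1 = aff u c := by
  obtain ⟨hbot, -, -, hconv⟩ := g.2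
  -- g is real-valued
  have hreal : ∀ x, g.1 x = (((g.1 x).toReal : ℝ) : EReal) := by
    intro x
    refine (EReal.coe_toReal ?_ (hbot x)).symm
    exact ne_top_of_le_ne_top (EReal.coe_ne_top _) (h x)
  set gr : X → ℝ := fun x => (g.1 x).toReal with hgr
  have hle : ∀ x, gr x ≤ u x + α := by
    intro x
    have := h x; rw [hreal x] at this
    exact EReal.coe_le_coe_iff.1 this
  have hconvr : ∀ x y : X, ∀ a b : ℝ, 0 ≤ a → 0 ≤ b → a + b = 1 →
      gr (a • x + b • y) ≤ a * gr x + b * gr y := by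
    intro x y a b ha hb hab
    have := hconv x y a b ha hb hab
    rw [hreal x, hreal y, hreal (a • x + b • y), ← EReal.coe_mul, ← EReal.coe_mul,
      ← EReal.coe_add] at this
    exact EReal.coe_le_coe_iff.1 this
  -- the function k = gr - u is constant
  have key : ∀ x y : X, gr y - u y ≤ gr x - u x := by
    intro x y
    by_contra hlt
    push_neg at hlt
    set ε := (gr y - u y) - (gr x - u x) with hε
    have hεpos : 0 < ε := by simp [hε]; linarith
    obtain ⟨n, hn⟩ := exists_nat_gt ((α - (gr x - u x)) / ε)
    -- convex combination: y = (n/(n+1)) • x + (1/(n+1)) • z with z = (n+1)•y - n•x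
    set z : X := (n + 1 : ℝ) • y - (n : ℝ) • x with hz
    have hne0 : (n : ℝ) + 1 ≠ 0 := by positivity
    have hcomb : ((n : ℝ)/(n+1)) • x + (1/(n+1) : ℝ) • z = y := by
      rw [hz]
      match_scalars <;> field_simp <;> ring
    have h1 : gr y ≤ ((n : ℝ)/(n+1)) * gr x + (1/(n+1)) * gr z := by
      have := hconvr x z ((n : ℝ)/(n+1)) (1/(n+1)) (by positivity) (by positivity)
        (by field_simp)
      rwa [hcomb] at this
    have h2 : gr z ≤ u z + α := hle z
    have h3 : u z = (n+1) * u y - n * u x := by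
      rw [hz]; simp [map_sub, map_smul]
    have hne : (0:ℝ) < (n:ℝ) + 1 := by positivity
    -- from h1,h2,h3: (gr y - u y) ≤ (n/(n+1)) (gr x - u x) + α/(n+1) - ... compute
    have h1' : gr y * ((n:ℝ)+1) ≤ (n:ℝ) * gr x + gr z := by
      field_simp at h1; exact h1
    have h4 : (gr y - u y) - (gr x - u x) ≤ (α - (gr x - u x)) / (n+1) := by
      rw [le_div_iff₀ hne]
      nlinarith [h1', h2, h3]
    have h5 : (α - (gr x - u x)) / (n+1) < ε := by
      rw [div_lt_iff₀ hne]
      rw [div_lt_iff₀ hεpos] at hn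
      nlinarith [hn, hεpos]
    rw [← hε] at h4
    linarith
  have hconst : ∀ x, gr x - u x = gr 0 - u 0 := fun x =>
    le_antisymm (key 0 x) (key x 0)
  refine ⟨gr 0 - u 0, by have := hle 0; simp at this ⊢; linarith, ?_⟩
  funext x
  rw [hreal x]
  show ((gr x : ℝ) : EReal) = aff u (gr 0 - u 0) x
  unfold aff
  norm_cast
  linarith [hconst x]



/-- The set of affine minorants of `f`. -/
def Mino (f : Cl X) : Type _ := {p : (X →L[ℝ] ℝ) × ℝ // ∀ y, aff p.1 p.2 y ≤ f.1 y}

/-- The separation step. -/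
lemma sep_main (f : Cl X) (x₀ : X) (r : ℝ) (hr : (r : EReal) < f.1 x₀) :
    (∃ u α, (∀ y, aff u α y ≤ f.1 y) ∧ r < u x₀ + α) ∨
    (∃ (u₀ : X →L[ℝ] ℝ) (m : ℝ), u₀ x₀ < m ∧ ∀ y, f.1 y ≠ ⊤ → m < u₀ y) := by
  obtain ⟨hbot, ⟨x₁, hx₁⟩, hlsc, hconv⟩ := f.2
  set S : Set (X × ℝ) := {p | f.1 p.1 ≤ (p.2 : EReal)} with hS
  have hSconv : Convex ℝ S := by
    intro p hp q hq a b ha hb hab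
    have h1 : f.1 (a • p.1 + b • q.1) ≤ (a : EReal) * f.1 p.1 + (b : EReal) * f.1 q.1 :=
      hconv p.1 q.1 a b ha hb hab
    have h2 : (a : EReal) * f.1 p.1 ≤ (a : EReal) * ((p.2 : ℝ) : EReal) :=
      mul_le_mul_of_nonneg_left hp (by exact_mod_cast ha)
    have h3 : (b : EReal) * f.1 q.1 ≤ (b : EReal) * ((q.2 : ℝ) : EReal) :=
      mul_le_mul_of_nonneg_left hq (by exact_mod_cast hb)
    have : f.1 (a • p.1 + b • q.1) ≤ ((a * p.2 + b * q.2 : ℝ) : EReal) := by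
      rw [EReal.coe_add, EReal.coe_mul, EReal.coe_mul]
      exact h1.trans (add_le_add h2 h3)
    exact this
  have hSclosed : IsClosed S := by
    have hcompl : Sᶜ = {p : X × ℝ | (p.2 : EReal) < f.1 p.1} := by
      ext p; simp [hS, not_le]
    rw [← isOpen_compl_iff, hcompl]
    rw [isOpen_iff_mem_nhds]
    intro p hp
    obtain ⟨m, hm1, hm2⟩ := EReal.lt_iff_exists_real_btwn.1 hp
    have h1 : ∀ᶠ y in 𝓝 p.1, (m : EReal) < f.1 y := hlsc p.1 (m : EReal) hm2
    have h1' : ∀ᶠ q : X × ℝ in 𝓝 p, (m : EReal) < f.1 q.1 :=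
      (continuous_fst.tendsto p).eventually h1
    have h2 : ∀ᶠ t : ℝ in 𝓝 p.2, t < m :=
      Filter.Tendsto.eventually_lt_const (EReal.coe_lt_coe_iff.1 hm1) tendsto_id
    have h2' : ∀ᶠ q : X × ℝ in 𝓝 p, q.2 < m := (continuous_snd.tendsto p).eventually h2
    filter_upwards [h1', h2'] with q hq1 hq2
    exact lt_trans (EReal.coe_lt_coe_iff.2 hq2) hq1
  have hnotmem : (x₀, r) ∉ S := by simp [hS]; exact hr
  obtain ⟨φ, m, hφ1, hφ2⟩ := geometric_hahn_banach_point_closed hSconv hSclosed hnotmem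
  set u₀ : X →L[ℝ] ℝ := φ.comp (ContinuousLinearMap.inl ℝ X ℝ) with hu₀
  set s : ℝ := φ (0, 1) with hs
  have hdecomp : ∀ p : X × ℝ, φ p = u₀ p.1 + p.2 * s := by
    intro p
    have hp : p = (p.1, (0:ℝ)) + p.2 • ((0:X), (1:ℝ)) := by
      simp [Prod.ext_iff]
    rw [hp, map_add, map_smul]
    simp [hu₀, hs, smul_eq_mul]
  have hmem : ∀ (y : X) (t : ℝ), f.1 y ≤ (t : EReal) → m < u₀ y + t * s := by
    intro y t ht
    have := hφ2 (y, t) ht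
    rwa [hdecomp (y, t)] at this
  have hφ1' : u₀ x₀ + r * s < m := by rw [← hdecomp (x₀, r)]; exact hφ1
  have hx₁real : f.1 x₁ = (((f.1 x₁).toReal : ℝ) : EReal) := (EReal.coe_toReal hx₁ (hbot x₁)).symm
  have hsnn : 0 ≤ s := by
    by_contra hneg
    push_neg at hneg
    set t : ℝ := max ((f.1 x₁).toReal) ((m - u₀ x₁) / s + 1) with ht
    have h1 : f.1 x₁ ≤ (t : EReal) := by
      rw [hx₁real]; exact EReal.coe_le_coe_iff.2 (le_max_left _ _)
    have h2 := hmem x₁ t h1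
    have h3 : (m - u₀ x₁) / s < t := by
      have := le_max_right ((f.1 x₁).toReal) ((m - u₀ x₁) / s + 1); linarith [this.trans_eq ht.symm]
    have h4 : t * s < ((m - u₀ x₁) / s) * s := mul_lt_mul_of_neg_right h3 hneg
    rw [div_mul_cancel₀ _ (ne_of_lt hneg)] at h4
    linarith
  rcases eq_or_lt_of_le hsnn with hs0 | hspos
  · -- vertical separation
    right
    refine ⟨u₀, m, ?_, ?_⟩
    · rw [← hs0] at hφ1'; simpa using hφ1'
    · intro y hy
      have hyreal : f.1 y = (((f.1 y).toReal : ℝ) : EReal) := (EReal.coe_toReal hy (hbot y)).symm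
      have := hmem y ((f.1 y).toReal) (le_of_eq hyreal)
      rw [← hs0] at this; simpa using this
  · -- genuine affine minorant
    left
    have hsne : s ≠ 0 := ne_of_gt hspos
    refine ⟨(-s⁻¹) • u₀, m / s, ?_, ?_⟩
    · intro y
      by_cases hy : f.1 y = ⊤
      · rw [hy]; exact le_top
      · have hyreal : f.1 y = (((f.1 y).toReal : ℝ) : EReal) :=
          (EReal.coe_toReal hy (hbot y)).symm
        have h5 := hmem y ((f.1 y).toReal) (le_of_eq hyreal)
        rw [hyreal]
        show (((-s⁻¹ • u₀) y + m / s : ℝ) : EReal) ≤ _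
        apply EReal.coe_le_coe_iff.2
        have h6 : m * s⁻¹ < (u₀ y + (f.1 y).toReal * s) * s⁻¹ :=
          mul_lt_mul_of_pos_right h5 (inv_pos.2 hspos)
        rw [add_mul, mul_assoc, mul_inv_cancel₀ hsne, mul_one] at h6
        simp only [ContinuousLinearMap.smul_apply, smul_eq_mul, neg_mul, div_eq_mul_inv]
        linarith [h6]
    · show r < (-s⁻¹ • u₀) x₀ + m / s
      have h6 : (u₀ x₀ + r * s) * s⁻¹ < m * s⁻¹ :=
        mul_lt_mul_of_pos_right hφ1' (inv_pos.2 hspos)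
      rw [add_mul, mul_assoc, mul_inv_cancel₀ hsne, mul_one] at h6
      simp only [ContinuousLinearMap.smul_apply, smul_eq_mul, neg_mul, div_eq_mul_inv]
      linarith [h6]

/-- Existence of an affine minorant with large value at a given point. -/
lemma exists_minorant_gt (f : Cl X) (x₀ : X) (r : ℝ) (hr : (r : EReal) < f.1 x₀) :
    ∃ u α, (∀ y, aff u α y ≤ f.1 y) ∧ r < u x₀ + α := by
  obtain ⟨hbot, ⟨x₁, hx₁⟩, hlsc, hconv⟩ := f.2
  have hx₁real : f.1 x₁ = (((f.1 x₁).toReal : ℝ) : EReal) := (EReal.coe_toReal hx₁ (hbot x₁)).symm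
  -- a base minorant
  have hbase : ∃ u α, (∀ y, aff u α y ≤ f.1 y) := by
    have hr₁ : (((f.1 x₁).toReal - 1 : ℝ) : EReal) < f.1 x₁ := by
      conv_rhs => rw [hx₁real]
      exact EReal.coe_lt_coe_iff.2 (by linarith)
    rcases sep_main f x₁ _ hr₁ with ⟨u, α, h1, _⟩ | ⟨u₀, m, h1, h2⟩
    · exact ⟨u, α, h1⟩
    · exact absurd (h2 x₁ hx₁) (by linarith)
  rcases sep_main f x₀ r hr with ⟨u, α, h1, h2⟩ | ⟨u₀, m, h1, h2⟩
  · exact ⟨u, α, h1, h2⟩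
  · obtain ⟨ub, αb, hb⟩ := hbase
    have hpos : 0 < m - u₀ x₀ := by linarith
    obtain ⟨n, hn⟩ := exists_nat_gt ((r - (ub x₀ + αb)) / (m - u₀ x₀))
    refine ⟨ub - (n : ℝ) • u₀, αb + n * m, ?_, ?_⟩
    · intro y
      by_cases hy : f.1 y = ⊤
      · rw [hy]; exact le_top
      · have h3 := h2 y hy
        refine le_trans ?_ (hb y)
        show (((ub - (n:ℝ) • u₀) y + (αb + n * m) : ℝ) : EReal) ≤ ((ub y + αb : ℝ) : EReal)
        apply EReal.coe_le_coe_iff.2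
        simp only [ContinuousLinearMap.sub_apply, ContinuousLinearMap.smul_apply, smul_eq_mul]
        nlinarith [h3, Nat.cast_nonneg (α := ℝ) n]
    · show r < (ub - (n:ℝ) • u₀) x₀ + (αb + n * m)
      simp only [ContinuousLinearMap.sub_apply, ContinuousLinearMap.smul_apply, smul_eq_mul]
      rw [div_lt_iff₀ hpos] at hn
      nlinarith [hn]

lemma mino_nonempty (f : Cl X) : Nonempty (Mino f) := by
  obtain ⟨hbot, ⟨x₁, hx₁⟩, -, -⟩ := f.2
  have hx₁real : f.1 x₁ = (((f.1 x₁).toReal : ℝ) : EReal) := (EReal.coe_toReal hx₁ (hbot x₁)).symm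
  have hr₁ : (((f.1 x₁).toReal - 1 : ℝ) : EReal) < f.1 x₁ := by
    conv_rhs => rw [hx₁real]
    exact EReal.coe_lt_coe_iff.2 (by linarith)
  obtain ⟨u, α, h1, -⟩ := exists_minorant_gt f x₁ _ hr₁
  exact ⟨⟨(u, α), h1⟩⟩

/-- Fenchel–Moreau: every `f ∈ C(X)` is the pointwise supremum of its affine minorants. -/
theorem fm (f : Cl X) (x : X) :
    f.1 x = ⨆ p : Mino f, ((p.1.1 x + p.1.2 : ℝ) : EReal) := by
  refine le_antisymm ?_ (iSup_le fun p => p.2 x)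
  by_contra h
  push_neg at h
  obtain ⟨r, h1, h2⟩ := EReal.lt_iff_exists_real_btwn.1 h
  obtain ⟨u, α, hm, hv⟩ := exists_minorant_gt f x r h2
  have h3 : ((u x + α : ℝ) : EReal) ≤ ⨆ p : Mino f, ((p.1.1 x + p.1.2 : ℝ) : EReal) :=
    le_iSup (fun p : Mino f => ((p.1.1 x + p.1.2 : ℝ) : EReal)) ⟨(u, α), hm⟩
  exact absurd (lt_of_lt_of_le (EReal.coe_lt_coe_iff.2 hv) h3) (not_lt.2 h1.le)


end Aux

section Del
variable [NormedAddCommGroup X] [NormedSpace ℝ X]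

lemma ereal_coe_mul_ne_bot {a : ℝ} (ha : 0 ≤ a) {z : EReal} (hz : z ≠ ⊥) :
    (a : EReal) * z ≠ ⊥ := by
  induction z using EReal.rec with
  | bot => exact absurd rfl hz
  | coe r => rw [← EReal.coe_mul]; exact EReal.coe_ne_bot _
  | top =>
    rcases eq_or_lt_of_le ha with h0 | hpos
    · rw [← h0]; simp
    · rw [EReal.coe_mul_top_of_pos hpos]; exact top_ne_bot

lemma ereal_top_mix_left {a b : ℝ} (ha : 0 ≤ a) (hb : 0 < b) {z : EReal} (hz : z ≠ ⊥) :
    (a : EReal) * z + (b : EReal) * ⊤ = ⊤ := by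
  rw [EReal.coe_mul_top_of_pos hb]
  exact EReal.add_top_of_ne_bot (ereal_coe_mul_ne_bot ha hz)

lemma ereal_top_mix_right {a b : ℝ} (ha : 0 < a) (hb : 0 ≤ b) {z : EReal} (hz : z ≠ ⊥) :
    (a : EReal) * ⊤ + (b : EReal) * z = ⊤ := by
  rw [EReal.coe_mul_top_of_pos ha]
  exact EReal.top_add_of_ne_bot (ereal_coe_mul_ne_bot hb hz)

/-- To verify the convexity inequality it suffices to consider positive weights. -/
lemma convex_ineq_of_pos {g : X → EReal}
    (hpos : ∀ x y : X, ∀ a b : ℝ, 0 < a → 0 < b → a + b = 1 →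
      g (a • x + b • y) ≤ (a : EReal) * g x + (b : EReal) * g y) :
    ∀ x y : X, ∀ a b : ℝ, 0 ≤ a → 0 ≤ b → a + b = 1 →
      g (a • x + b • y) ≤ (a : EReal) * g x + (b : EReal) * g y := by
  intro x y a b ha hb hab
  rcases eq_or_lt_of_le ha with h0 | hapos
  · have hb1 : b = 1 := by linarith
    rw [← h0, hb1]; simp
  rcases eq_or_lt_of_le hb with h0 | hbpos
  · have ha1 : a = 1 := by linarith
    rw [← h0, ha1]; simp
  exact hpos x y a b hapos hbpos hab

open Classical in
/-- The function `δ_{x,β}`: `β` at `x` and `+∞` elsewhere. -/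
def del (x : X) (β : ℝ) : X → EReal := fun y => if y = x then (β : EReal) else ⊤

lemma del_ge (x : X) (β : ℝ) (y : X) : (β : EReal) ≤ del x β y := by
  unfold del; split
  · exact le_refl _
  · exact le_top

lemma delMem_aux (x : X) (β : ℝ) (y : X) : del x β y ≠ ⊥ := by
  unfold del; split
  · exact EReal.coe_ne_bot _
  · exact top_ne_bot

theorem delMem (x : X) (β : ℝ) : IsClFun X (del x β) := by
  refine ⟨?_, ⟨x, ?_⟩, ?_, ?_⟩
  · intro y; unfold del; split
    · exact EReal.coe_ne_bot _
    · exact top_ne_bot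
  · unfold del; rw [if_pos rfl]; exact EReal.coe_ne_top _
  · intro y z hz
    by_cases hy : y = x
    · subst hy
      rw [show del y β y = (β : EReal) from if_pos rfl] at hz
      exact Filter.Eventually.of_forall fun y' => lt_of_lt_of_le hz (del_ge y β y')
    · rw [show del x β y = ⊤ from if_neg hy] at hz
      have hnb : {x}ᶜ ∈ 𝓝 y := isOpen_compl_singleton.mem_nhds (by simpa using hy)
      filter_upwards [hnb] with y' hy'
      rw [show del x β y' = ⊤ from if_neg hy']
      exact hz
  · apply convex_ineq_of_pos
    intro p q a b ha hb hab
    by_cases hp : p = x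
    · by_cases hq : q = x
      · rw [hp, hq, Convex.combo_self hab]
        rw [show del x β x = (β : EReal) from if_pos rfl]
        rw [← EReal.coe_mul, ← EReal.coe_mul, ← EReal.coe_add]
        refine EReal.coe_le_coe_iff.2 ?_
        have : a * β + b * β = β := by rw [← add_mul, hab, one_mul]
        linarith
      · refine le_top.trans_eq ?_
        rw [show del x β q = ⊤ from if_neg hq]
        exact (ereal_top_mix_left ha.le hb ((delMem_aux x β p))).symm
    · refine le_top.trans_eq ?_
      rw [show del x β p = ⊤ from if_neg hp]
      exact (ereal_top_mix_right ha hb.le ((delMem_aux x β q))).symm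

def delCl (x : X) (β : ℝ) : Cl X := ⟨del x β, delMem x β⟩

lemma del_le_del_iff {x x' : X} {β β' : ℝ} :
    (∀ y, del x β y ≤ del x' β' y) ↔ x = x' ∧ β ≤ β' := by
  constructor
  · intro h
    have hx : x = x' := by
      by_contra hne
      have := h x'
      rw [show del x β x' = ⊤ from if_neg (fun hc => hne hc.symm),
        show del x' β' x' = (β' : EReal) from if_pos rfl] at this
      exact EReal.coe_ne_top β' (top_le_iff.1 this)
    subst hx
    have := h x
    rw [show del x β x = (β : EReal) from if_pos rfl,
      show del x β' x = (β' : EReal) from if_pos rfl] at this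
    exact ⟨rfl, EReal.coe_le_coe_iff.1 this⟩
  · rintro ⟨rfl, hβ⟩ y
    unfold del; split
    · exact EReal.coe_le_coe_iff.2 hβ
    · exact le_refl _

lemma del_inj {x x' : X} {β β' : ℝ} (h : del x β = del x' β') : x = x' ∧ β = β' := by
  have h1 := del_le_del_iff.1 (fun y => le_of_eq (congrFun h y))
  have h2 := del_le_del_iff.1 (fun y => le_of_eq (congrFun h y).symm)
  exact ⟨h1.1, le_antisymm h1.2 h2.2⟩

lemma aff_le_del_iff {u : X →L[ℝ] ℝ} {α : ℝ} {x : X} {β : ℝ} :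
    (∀ y, aff u α y ≤ del x β y) ↔ u x + α ≤ β := by
  constructor
  · intro h
    have := h x
    rw [show del x β x = (β : EReal) from if_pos rfl] at this
    exact EReal.coe_le_coe_iff.1 this
  · intro h y
    unfold del; split
    · rename_i hy; subst hy; exact EReal.coe_le_coe_iff.2 h
    · exact le_top

/-- Restriction of `f` to a closed half-space. -/
def restr (f : Cl X) (u : X →L[ℝ] ℝ) (c : ℝ) : X → EReal :=
  fun y => if u y ≤ c then f.1 y else ⊤

lemma restr_ge (f : Cl X) (u : X →L[ℝ] ℝ) (c : ℝ) (y : X) : f.1 y ≤ restr f u c y := by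
  unfold restr; split
  · exact le_refl _
  · exact le_top

theorem restrMem (f : Cl X) (u : X →L[ℝ] ℝ) (c : ℝ) (x₁ : X) (h₁ : u x₁ ≤ c)
    (hx₁ : f.1 x₁ ≠ ⊤) : IsClFun X (restr f u c) := by
  obtain ⟨hbot, -, hlsc, hconv⟩ := f.2
  have hrbot : ∀ y, restr f u c y ≠ ⊥ := by
    intro y; unfold restr; split
    · exact hbot y
    · exact top_ne_bot
  refine ⟨hrbot, ⟨x₁, ?_⟩, ?_, ?_⟩
  · unfold restr; rw [if_pos h₁]; exact hx₁
  · intro y z hz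
    by_cases hy : u y ≤ c
    · rw [show restr f u c y = f.1 y from if_pos hy] at hz
      filter_upwards [hlsc y z hz] with y' h'
      exact h'.trans_le (restr_ge f u c y')
    · push_neg at hy
      rw [show restr f u c y = ⊤ from if_neg (not_le.2 hy)] at hz
      have hnb : {w : X | c < u w} ∈ 𝓝 y :=
        (isOpen_lt continuous_const u.continuous).mem_nhds hy
      filter_upwards [hnb] with y' hy'
      rw [show restr f u c y' = ⊤ from if_neg (not_le.2 hy')]
      exact hz
  · apply convex_ineq_of_pos
    intro p q a b ha hb hab
    by_cases hp : u p ≤ c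
    · by_cases hq : u q ≤ c
      · have hcomb : u (a • p + b • q) ≤ c := by
          rw [map_add, map_smul, map_smul]; simp only [smul_eq_mul]
          have h' : a * c + b * c = c := by rw [← add_mul, hab, one_mul]
          nlinarith [mul_le_mul_of_nonneg_left hp ha.le, mul_le_mul_of_nonneg_left hq hb.le]
        rw [show restr f u c (a • p + b • q) = f.1 (a • p + b • q) from if_pos hcomb,
          show restr f u c p = f.1 p from if_pos hp,
          show restr f u c q = f.1 q from if_pos hq]
        exact hconv p q a b ha.le hb.le hab
      · refine le_top.trans_eq ?_
        rw [show restr f u c q = ⊤ from if_neg hq]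
        exact (ereal_top_mix_left ha.le hb (hrbot p)).symm
    · refine le_top.trans_eq ?_
      rw [show restr f u c p = ⊤ from if_neg hp]
      exact (ereal_top_mix_right ha hb.le (hrbot q)).symm

end Del

section Char
variable [NormedAddCommGroup X] [NormedSpace ℝ X]

def IsAffCl (f : Cl X) : Prop := ∃ u α, f.1 = aff u α

def IsDelCl (f : Cl X) : Prop := ∃ x β, f.1 = del x β

lemma affCl_inj {u u' : X →L[ℝ] ℝ} {α α' : ℝ} (h : aff u α = aff u' α') :
    u = u' ∧ α = α' := by
  have h1 := aff_le_aff_iff.1 (fun y => le_of_eq (congrFun h y))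
  have h2 := aff_le_aff_iff.1 (fun y => le_of_eq (congrFun h y).symm)
  exact ⟨h1.1, le_antisymm h1.2 h2.2⟩

/-- `f` is affine iff its set of minorants is totally ordered. -/
theorem isAffCl_iff_chainBelow (f : Cl X) :
    IsAffCl f ↔ ∀ g h : Cl X, g.1 ≤ f.1 → h.1 ≤ f.1 → g.1 ≤ h.1 ∨ h.1 ≤ g.1 := by
  constructor
  · rintro ⟨u, α, hf⟩ g h hg hh
    rw [hf] at hg hh
    obtain ⟨c, -, hgc⟩ := le_aff g u α (fun x => hg x)
    obtain ⟨c', -, hhc⟩ := le_aff h u α (fun x => hh x)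
    rcases le_total c c' with hcc | hcc
    · left; rw [hgc, hhc]; exact fun x => aff_le_aff_iff.2 ⟨rfl, hcc⟩ x
    · right; rw [hgc, hhc]; exact fun x => aff_le_aff_iff.2 ⟨rfl, hcc⟩ x
  · intro hchain
    obtain ⟨p₀⟩ := mino_nonempty f
    have hsame : ∀ p : Mino f, p.1.1 = p₀.1.1 := by
      intro p
      have h1 : (affCl p.1.1 p.1.2).1 ≤ f.1 := fun y => p.2 y
      have h2 : (affCl p₀.1.1 p₀.1.2).1 ≤ f.1 := fun y => p₀.2 y
      rcases hchain _ _ h1 h2 with hle | hle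
      · exact (aff_le_aff_iff.1 (fun y => hle y)).1
      · exact (aff_le_aff_iff.1 (fun y => hle y)).1.symm
    set u := p₀.1.1 with hu
    set A : Set ℝ := {α | ∀ y, aff u α y ≤ f.1 y} with hA
    have hA0 : p₀.1.2 ∈ A := fun y => p₀.2 y
    have hAne : A.Nonempty := ⟨p₀.1.2, hA0⟩
    obtain ⟨hbot, ⟨x₁, hx₁⟩, -, -⟩ := f.2
    have hx₁real : f.1 x₁ = (((f.1 x₁).toReal : ℝ) : EReal) :=
      (EReal.coe_toReal hx₁ (hbot x₁)).symm
    have hbdd : BddAbove A := by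
      refine ⟨(f.1 x₁).toReal - u x₁, fun α hα => ?_⟩
      have := hα x₁
      rw [hx₁real] at this
      have := EReal.coe_le_coe_iff.1 this
      linarith
    set α' : ℝ := sSup A with hα'
    have hmem : ∀ y, aff u α' y ≤ f.1 y := by
      intro y
      by_contra hcon
      push_neg at hcon
      have hytop : f.1 y ≠ ⊤ := ne_top_of_lt hcon
      have hyreal : f.1 y = (((f.1 y).toReal : ℝ) : EReal) :=
        (EReal.coe_toReal hytop (hbot y)).symm
      rw [hyreal] at hcon
      have hρ : (f.1 y).toReal < u y + α' := EReal.coe_lt_coe_iff.1 hcon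
      obtain ⟨γ, hγA, hγ⟩ := exists_lt_of_lt_csSup hAne
        (show α' - (u y + α' - (f.1 y).toReal) < α' by linarith)
      have := hγA y
      rw [hyreal] at this
      have := EReal.coe_le_coe_iff.1 this
      linarith
    refine ⟨u, α', ?_⟩
    funext x
    refine le_antisymm ?_ (hmem x)
    rw [fm f x]
    refine iSup_le fun p => ?_
    have hp2 : p.1.2 ∈ A := by
      have := hsame p
      intro y
      have h3 := p.2 y
      unfold aff at h3 ⊢
      rwa [this] at h3
    have : p.1.2 ≤ α' := le_csSup hbdd hp2
    have huu : p.1.1 x = u x := by rw [hsame p]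
    apply EReal.coe_le_coe_iff.2
    rw [huu]
    linarith

/-- `f` is a `δ` function iff its set of majorants is totally ordered. -/
theorem isDelCl_iff_chainAbove (f : Cl X) :
    IsDelCl f ↔ ∀ g h : Cl X, f.1 ≤ g.1 → f.1 ≤ h.1 → g.1 ≤ h.1 ∨ h.1 ≤ g.1 := by
  constructor
  · rintro ⟨x, β, hf⟩ g h hg hh
    rw [hf] at hg hh
    have hgtop : ∀ y, y ≠ x → g.1 y = ⊤ := by
      intro y hy
      have := hg y
      rw [show del x β y = ⊤ from if_neg hy] at this
      exact top_le_iff.1 this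
    have hhtop : ∀ y, y ≠ x → h.1 y = ⊤ := by
      intro y hy
      have := hh y
      rw [show del x β y = ⊤ from if_neg hy] at this
      exact top_le_iff.1 this
    rcases le_total (g.1 x) (h.1 x) with hle | hle
    · left; intro y
      by_cases hy : y = x
      · rw [hy]; exact hle
      · rw [hhtop y hy]; exact le_top
    · right; intro y
      by_cases hy : y = x
      · rw [hy]; exact hle
      · rw [hgtop y hy]; exact le_top
  · intro hchain
    obtain ⟨hbot, ⟨x₁, hx₁⟩, hlsc, hconv⟩ := f.2
    by_cases hdom : ∃ x₂, f.1 x₂ ≠ ⊤ ∧ x₂ ≠ x₁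
    · exfalso
      obtain ⟨x₂, hx₂, hne⟩ := hdom
      obtain ⟨u, -, hux⟩ := exists_dual_vector ℝ (x₂ - x₁) (norm_ne_zero_iff.2 (sub_ne_zero.2 hne))
      have hu12 : u x₁ < u x₂ := by
        have h0 : (0:ℝ) < ‖x₂ - x₁‖ := norm_pos_iff.2 (sub_ne_zero.2 hne)
        have : u x₂ - u x₁ = ‖x₂ - x₁‖ := by rw [← map_sub]; exact_mod_cast hux
        linarith
      set c : ℝ := (u x₁ + u x₂) / 2 with hc
      have h₁c : u x₁ ≤ c := by rw [hc]; linarith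
      have h₂c : (-u) x₂ ≤ -c := by simp only [ContinuousLinearMap.neg_apply]; rw [hc]; linarith
      set g₁ : Cl X := ⟨restr f u c, restrMem f u c x₁ h₁c hx₁⟩ with hg₁
      set g₂ : Cl X := ⟨restr f (-u) (-c), restrMem f (-u) (-c) x₂ h₂c hx₂⟩ with hg₂
      have hfg₁ : f.1 ≤ g₁.1 := fun y => restr_ge f u c y
      have hfg₂ : f.1 ≤ g₂.1 := fun y => restr_ge f (-u) (-c) y
      have hg₁x₂ : g₁.1 x₂ = ⊤ := if_neg (by rw [hc]; push_neg; linarith)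
      have hg₂x₁ : g₂.1 x₁ = ⊤ := if_neg (by simp only [ContinuousLinearMap.neg_apply]; push_neg; rw [hc]; linarith)
      have hg₁x₁ : g₁.1 x₁ = f.1 x₁ := if_pos h₁c
      have hg₂x₂ : g₂.1 x₂ = f.1 x₂ := if_pos h₂c
      rcases hchain g₁ g₂ hfg₁ hfg₂ with hle | hle
      · have := hle x₂
        rw [hg₁x₂, hg₂x₂] at this
        exact hx₂ (top_le_iff.1 this)
      · have := hle x₁
        rw [hg₂x₁, hg₁x₁] at this
        exact hx₁ (top_le_iff.1 this)
    · push_neg at hdom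
      refine ⟨x₁, (f.1 x₁).toReal, ?_⟩
      funext y
      by_cases hy : y = x₁
      · rw [hy, show del x₁ ((f.1 x₁).toReal) x₁ = (((f.1 x₁).toReal : ℝ) : EReal) from if_pos rfl]
        exact (EReal.coe_toReal hx₁ (hbot x₁)).symm
      · rw [show del x₁ ((f.1 x₁).toReal) y = ⊤ from if_neg hy]
        by_contra hcon
        exact hy (hdom y hcon)

end Char

section Helpers

lemma galois_eq {s : ℝ → ℝ} (hmono : Monotone s) (hsurj : Function.Surjective s)
    {t K : ℝ} (h : ∀ α, α ≤ t ↔ s α ≤ K) : s t = K := by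
  obtain ⟨α₀, hα₀⟩ := hsurj K
  have h1 : s t ≤ K := (h t).1 le_rfl
  have h2 : α₀ ≤ t := (h α₀).2 (le_of_eq hα₀)
  exact le_antisymm h1 (hα₀ ▸ hmono h2)

lemma additive_monotone_linear {ψ : ℝ → ℝ} (hadd : ∀ p q, ψ (p + q) = ψ p + ψ q)
    (hmono : Monotone ψ) : ∀ t, ψ t = t * ψ 1 := by
  have h0 : ψ 0 = 0 := by have := hadd 0 0; simp at this; linarith
  set g : ℝ →+ ℝ := AddMonoidHom.mk' ψ (fun a b => hadd a b) with hg
  have hq : ∀ q : ℚ, ψ (q : ℝ) = (q : ℝ) * ψ 1 := by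
    intro q
    have h1 : g ((q : ℝ) * 1) = (q : ℝ) * g 1 := by
      have := map_ratCast_smul g ℝ ℝ q (1 : ℝ)
      simpa [Rat.smul_def] using this
    simpa [hg] using h1
  have h1nn : 0 ≤ ψ 1 := by
    have := hmono (show (0:ℝ) ≤ 1 by norm_num); rw [h0] at this; exact this
  intro t
  refine le_antisymm ?_ ?_
  · by_contra hc
    push_neg at hc
    rcases eq_or_lt_of_le h1nn with hz | hpos
    · obtain ⟨q', hq1, _⟩ := exists_rat_btwn (lt_add_one t)
      obtain ⟨q, _, hq2⟩ := exists_rat_btwn (sub_one_lt t)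
      have hu : ψ t ≤ ψ (q' : ℝ) := hmono hq1.le
      have hl : ψ (q : ℝ) ≤ ψ t := hmono hq2.le
      rw [hq q', ← hz] at hu
      rw [hq q, ← hz] at hl
      simp at hu hl
      rw [← hz] at hc
      simp at hc
      linarith
    · set ε := (ψ t - t * ψ 1) / ψ 1 with hε
      have hεpos : 0 < ε := div_pos (by linarith) hpos
      obtain ⟨q', hq1, hq2⟩ := exists_rat_btwn (show t < t + ε by linarith)
      have hu : ψ t ≤ ψ (q' : ℝ) := hmono hq1.le
      rw [hq q'] at hu
      have : (q' : ℝ) * ψ 1 < (t + ε) * ψ 1 := by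
        apply mul_lt_mul_of_pos_right hq2 hpos
      have hεψ : ε * ψ 1 = ψ t - t * ψ 1 := by
        rw [hε]; field_simp
      nlinarith
  · by_contra hc
    push_neg at hc
    rcases eq_or_lt_of_le h1nn with hz | hpos
    · obtain ⟨q', hq1, _⟩ := exists_rat_btwn (lt_add_one t)
      obtain ⟨q, _, hq2⟩ := exists_rat_btwn (sub_one_lt t)
      have hu : ψ t ≤ ψ (q' : ℝ) := hmono hq1.le
      have hl : ψ (q : ℝ) ≤ ψ t := hmono hq2.le
      rw [hq q', ← hz] at hu
      rw [hq q, ← hz] at hl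
      simp at hu hl
      rw [← hz] at hc
      simp at hc
      linarith
    · set ε := (t * ψ 1 - ψ t) / ψ 1 with hε
      have hεpos : 0 < ε := div_pos (by linarith) hpos
      obtain ⟨q, hq1, hq2⟩ := exists_rat_btwn (show t - ε < t by linarith)
      have hl : ψ (q : ℝ) ≤ ψ t := hmono hq2.le
      rw [hq q] at hl
      have : (t - ε) * ψ 1 < (q : ℝ) * ψ 1 := mul_lt_mul_of_pos_right hq1 hpos
      have hεψ : ε * ψ 1 = t * ψ 1 - ψ t := by
        rw [hε]; field_simp
      nlinarith

lemma dual_sep {X : Type*} [NormedAddCommGroup X] [NormedSpace ℝ X]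
    (z : X) (h : ∀ u : X →L[ℝ] ℝ, u z = 0) : z = 0 := by
  by_contra hz
  obtain ⟨u, -, hu⟩ := exists_dual_vector ℝ z (norm_ne_zero_iff.2 hz)
  have h2 : (‖z‖ : ℝ) = 0 := by
    have := h u
    rw [hu] at this
    exact_mod_cast this
  exact hz (norm_eq_zero.1 h2)

end Helpers

section Forward
variable [NormedAddCommGroup X] [NormedSpace ℝ X]

theorem forward_direction [CompleteSpace X] (hdim : 2 ≤ Module.rank ℝ X) (T : Cl X → Cl X)
    (hmono : ∀ f g : Cl X, f.1 ≤ g.1 → (T f).1 ≤ (T g).1) (hinv : ∀ f : Cl X, T (T f) = f) :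
    ∃ (c : X) (w : X →L[ℝ] ℝ) (E : X ≃L[ℝ] X),
      (∀ x, E (E x) = x) ∧ E c = -c ∧ (∀ x, w (E x) = -(w x)) ∧
      ∀ (f : Cl X) (x : X),
        (T f).1 x = f.1 (E x + c) + ((w x - w c / 2 : ℝ) : EReal) := by
  classical
  -- T preserves affine functions
  have haffpres : ∀ f : Cl X, IsAffCl f → IsAffCl (T f) := by
    intro f hf
    rw [isAffCl_iff_chainBelow] at hf ⊢
    intro g h hg hh
    have hg' : (T g).1 ≤ f.1 := by
      have := hmono _ _ hg; rwa [hinv f] at this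
    have hh' : (T h).1 ≤ f.1 := by
      have := hmono _ _ hh; rwa [hinv f] at this
    rcases hf _ _ hg' hh' with hle | hle
    · left
      have := hmono _ _ hle; rwa [hinv g, hinv h] at this
    · right
      have := hmono _ _ hle; rwa [hinv h, hinv g] at this
  have hdelpres : ∀ f : Cl X, IsDelCl f → IsDelCl (T f) := by
    intro f hf
    rw [isDelCl_iff_chainAbove] at hf ⊢
    intro g h hg hh
    have hg' : f.1 ≤ (T g).1 := by
      have := hmono _ _ hg; rwa [hinv f] at this
    have hh' : f.1 ≤ (T h).1 := by
      have := hmono _ _ hh; rwa [hinv f] at this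
    rcases hf _ _ hg' hh' with hle | hle
    · left
      have := hmono _ _ hle; rwa [hinv g, hinv h] at this
    · right
      have := hmono _ _ hle; rwa [hinv h, hinv g] at this
  -- choose components
  have haffex : ∀ (u : X →L[ℝ] ℝ) (α : ℝ), ∃ u' α', (T (affCl u α)).1 = aff u' α' :=
    fun u α => haffpres _ ⟨u, α, rfl⟩
  choose V0 M hVM using haffex
  have hdelex : ∀ (x : X) (β : ℝ), ∃ x' β', (T (delCl x β)).1 = del x' β' :=
    fun x β => hdelpres _ ⟨x, β, rfl⟩
  choose A0 G hAG using hdelex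
  have haffle : ∀ (u u' : X →L[ℝ] ℝ) (α α' : ℝ),
      (affCl u α).1 ≤ (affCl u' α').1 ↔ (u = u' ∧ α ≤ α') := by
    intro u u' α α'
    constructor
    · intro h; exact aff_le_aff_iff.1 (fun y => h y)
    · intro h y; exact aff_le_aff_iff.2 h y
  have hdelle : ∀ (x x' : X) (β β' : ℝ),
      (delCl x β).1 ≤ (delCl x' β').1 ↔ (x = x' ∧ β ≤ β') := by
    intro x x' β β'
    constructor
    · intro h; exact del_le_del_iff.1 (fun y => h y)
    · intro h y; exact del_le_del_iff.2 h y
  -- independence of the linear part from α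
  have hVind : ∀ u α, V0 u α = V0 u 0 := by
    intro u α
    rcases le_total α 0 with h | h
    · have h2 := hmono _ _ ((haffle u u α 0).2 ⟨rfl, h⟩)
      rw [hVM u α, hVM u 0] at h2
      exact (aff_le_aff_iff.1 (fun y => h2 y)).1
    · have h2 := hmono _ _ ((haffle u u 0 α).2 ⟨rfl, h⟩)
      rw [hVM u 0, hVM u α] at h2
      exact (aff_le_aff_iff.1 (fun y => h2 y)).1.symm
  have hTaff : ∀ u α, (T (affCl u α)).1 = aff (V0 u 0) (M u α) := by
    intro u α; rw [hVM u α, hVind u α]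
  have hTaffCl : ∀ u α, T (affCl u α) = affCl (V0 u 0) (M u α) :=
    fun u α => Subtype.ext (hTaff u α)
  -- independence of the del point from β
  have hAind : ∀ x β, A0 x β = A0 x 0 := by
    intro x β
    rcases le_total β 0 with h | h
    · have h2 := hmono _ _ ((hdelle x x β 0).2 ⟨rfl, h⟩)
      rw [hAG x β, hAG x 0] at h2
      exact (del_le_del_iff.1 (fun y => h2 y)).1
    · have h2 := hmono _ _ ((hdelle x x 0 β).2 ⟨rfl, h⟩)
      rw [hAG x 0, hAG x β] at h2
      exact (del_le_del_iff.1 (fun y => h2 y)).1.symm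
  have hTdel : ∀ x β, (T (delCl x β)).1 = del (A0 x 0) (G x β) := by
    intro x β; rw [hAG x β, hAind x β]
  have hTdelCl : ∀ x β, T (delCl x β) = delCl (A0 x 0) (G x β) :=
    fun x β => Subtype.ext (hTdel x β)
  -- M is monotone
  have hMmono : ∀ u, Monotone (M u) := by
    intro u α α' h
    have h1 := hmono _ _ ((haffle u u α α').2 ⟨rfl, h⟩)
    rw [hTaff u α, hTaff u α'] at h1
    exact (aff_le_aff_iff.1 (fun y => h1 y)).2
  -- M is surjective
  have hMsurj : ∀ u, Function.Surjective (M u) := by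
    intro u β
    obtain ⟨u'', α'', h''⟩ := haffpres _ (⟨V0 u 0, β, rfl⟩ : IsAffCl (affCl (V0 u 0) β))
    have h2 : u'' = u := by
      rcases le_total β (M u 0) with h | h
      · have h3 : (affCl (V0 u 0) β).1 ≤ (T (affCl u 0)).1 := by
          rw [hTaffCl u 0]; exact (haffle _ _ _ _).2 ⟨rfl, h⟩
        have h4 := hmono _ _ h3
        rw [hinv (affCl u 0), h''] at h4
        exact (aff_le_aff_iff.1 (fun y => h4 y)).1
      · have h3 : (T (affCl u 0)).1 ≤ (affCl (V0 u 0) β).1 := by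
          rw [hTaffCl u 0]; exact (haffle _ _ _ _).2 ⟨rfl, h⟩
        have h4 := hmono _ _ h3
        rw [hinv (affCl u 0), h''] at h4
        exact (aff_le_aff_iff.1 (fun y => h4 y)).1.symm
    refine ⟨α'', ?_⟩
    have h3 : T (affCl u'' α'') = affCl (V0 u 0) β := by
      have h4 : affCl u'' α'' = T (affCl (V0 u 0) β) := Subtype.ext h''.symm
      rw [h4, hinv]
    rw [h2, hTaffCl u α''] at h3
    exact (affCl_inj (congrArg Subtype.val h3)).2
  -- the incidence relation
  have hinc : ∀ u α x β, u x + α ≤ β ↔ (V0 u 0) (A0 x 0) + M u α ≤ G x β := by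
    intro u α x β
    have h1 : ((affCl u α).1 ≤ (delCl x β).1) ↔ u x + α ≤ β := by
      constructor
      · intro h; exact aff_le_del_iff.1 (fun y => h y)
      · intro h y; exact aff_le_del_iff.2 h y
    have h2 : ((affCl u α).1 ≤ (delCl x β).1) ↔
        ((T (affCl u α)).1 ≤ (T (delCl x β)).1) := by
      constructor
      · exact hmono _ _
      · intro h
        have := hmono _ _ h
        rwa [hinv, hinv] at this
    have h3 : ((T (affCl u α)).1 ≤ (T (delCl x β)).1) ↔
        ((V0 u 0) (A0 x 0) + M u α ≤ G x β) := by
      rw [hTaff u α, hTdel x β]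
      constructor
      · intro h; exact aff_le_del_iff.1 (fun y => h y)
      · intro h y; exact aff_le_del_iff.2 h y
    rw [← h1, h2, h3]
  -- Galois consequences
  have hE1 : ∀ u x β, M u (β - u x) = G x β - (V0 u 0) (A0 x 0) := by
    intro u x β
    apply galois_eq (hMmono u) (hMsurj u)
    intro α
    constructor
    · intro h
      have := (hinc u α x β).1 (by linarith)
      linarith
    · intro h
      have := (hinc u α x β).2 (by linarith)
      linarith
  have hE2 : ∀ x β, G x β = M 0 β + (V0 0 0) (A0 x 0) := by
    intro x β
    have := hE1 0 x β
    simp only [ContinuousLinearMap.zero_apply, sub_zero] at this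
    linarith
  have hE4 : ∀ u x, (V0 u 0) (A0 x 0) = M 0 (u x) + (V0 0 0) (A0 x 0) - M u 0 := by
    intro u x
    have h1 := hE1 u x (u x)
    rw [sub_self] at h1
    have h2 := hE2 x (u x)
    linarith
  have hE5 : ∀ u x β, M u (β - u x) = M 0 β - M 0 (u x) + M u 0 := by
    intro u x β
    have h1 := hE1 u x β
    have h2 := hE2 x β
    have h3 := hE4 u x
    linarith
  -- a nonzero functional with full range
  have hnt : Nontrivial X := by
    rcases subsingleton_or_nontrivial X with hs | hn
    · exfalso
      rw [rank_subsingleton' ℝ X] at hdim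
      norm_num at hdim
    · exact hn
  obtain ⟨xh, hxh⟩ := exists_ne (0 : X)
  obtain ⟨u₀, -, hu₀⟩ := exists_dual_vector ℝ xh (norm_ne_zero_iff.2 hxh)
  have hu₀x : u₀ xh = ‖xh‖ := by exact_mod_cast hu₀
  have hrange : ∀ t : ℝ, ∃ x, u₀ x = t := by
    intro t
    refine ⟨(t / ‖xh‖) • xh, ?_⟩
    rw [map_smul, smul_eq_mul, hu₀x, div_mul_cancel₀]
    exact norm_ne_zero_iff.2 hxh
  -- the additive function ψ
  have hψadd : ∀ p q, (M 0 (p + q) - M 0 0) = (M 0 p - M 0 0) + (M 0 q - M 0 0) := by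
    intro p q
    obtain ⟨xq, hxq⟩ := hrange q
    obtain ⟨x0, hx0⟩ := hrange 0
    have h1 := hE5 u₀ xq (p + q)
    have h2 := hE5 u₀ x0 p
    rw [hxq] at h1
    rw [hx0] at h2
    simp only [add_sub_cancel_right, sub_zero] at h1 h2
    linarith
  have hψmono : Monotone (fun t => M 0 t - M 0 0) := by
    intro a b h
    have := hMmono 0 h
    simp only
    linarith
  have hψlin := additive_monotone_linear hψadd hψmono
  -- M has the form lam * β + M u 0
  have hM : ∀ u β, M u β = (M 0 1 - M 0 0) * β + M u 0 := by
    intro u β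
    have h1 := hE5 u 0 β
    rw [map_zero] at h1
    simp only [sub_zero] at h1
    have h2 := hψlin β
    linarith
  -- involution on affine components
  have haffinv : ∀ u α, V0 (V0 u 0) 0 = u ∧ M (V0 u 0) (M u α) = α := by
    intro u α
    have h1 : T (T (affCl u α)) = affCl u α := hinv _
    rw [hTaffCl u α, hTaffCl (V0 u 0) (M u α)] at h1
    exact affCl_inj (congrArg Subtype.val h1)
  have hlam1 : M 0 1 - M 0 0 = 1 := by
    have h0 := (haffinv 0 0).2
    have h1 := (haffinv 0 1).2
    rw [hM (V0 0 0) (M 0 0), hM 0 0] at h0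
    rw [hM (V0 0 0) (M 0 1), hM 0 1] at h1
    have hnn : 0 ≤ M 0 1 - M 0 0 := by
      have := hMmono 0 (show (0:ℝ) ≤ 1 by norm_num)
      linarith
    nlinarith [h0, h1, hnn]
  -- A is an involution
  have hAinv : ∀ x, A0 (A0 x 0) 0 = x := by
    intro x
    have h1 : T (T (delCl x 0)) = delCl x 0 := hinv _
    rw [hTdelCl x 0, hTdelCl (A0 x 0) (G x 0)] at h1
    exact (del_inj (congrArg Subtype.val h1)).1
  -- formula for V
  have hE6 : ∀ u y, (V0 u 0) y = u (A0 y 0) + M 0 0 + (V0 0 0) y - M u 0 := by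
    intro u y
    have h1 := hE4 u (A0 y 0)
    rw [hAinv y] at h1
    have h2 := hM 0 (u (A0 y 0))
    rw [hlam1, one_mul] at h2
    linarith
  -- the linear part of A
  have hGlin : ∀ (u : X →L[ℝ] ℝ) (y : X),
      u (A0 y 0 - A0 0 0) = (V0 u 0) y - (V0 0 0) y := by
    intro u y
    have h1 := hE6 u y
    have h2 := hE6 u 0
    have hV0 : (V0 u 0) (0:X) = 0 := map_zero _
    have hw0 : (V0 0 0) (0:X) = 0 := map_zero _
    rw [hV0, hw0] at h2
    rw [map_sub]
    linarith
  have hGadd : ∀ y z, (A0 (y + z) 0 - A0 0 0) = (A0 y 0 - A0 0 0) + (A0 z 0 - A0 0 0) := by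
    intro y z
    have hker : ∀ u : X →L[ℝ] ℝ,
        u ((A0 (y + z) 0 - A0 0 0) - ((A0 y 0 - A0 0 0) + (A0 z 0 - A0 0 0))) = 0 := by
      intro u
      rw [map_sub, map_add, hGlin u (y + z), hGlin u y, hGlin u z, map_add, map_add]
      ring
    have := dual_sep _ hker
    rwa [sub_eq_zero] at this
  have hGsmul : ∀ (r : ℝ) (y : X), (A0 (r • y) 0 - A0 0 0) = r • (A0 y 0 - A0 0 0) := by
    intro r y
    have hker : ∀ u : X →L[ℝ] ℝ,
        u ((A0 (r • y) 0 - A0 0 0) - r • (A0 y 0 - A0 0 0)) = 0 := by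
      intro u
      rw [map_sub, map_smul, hGlin u (r • y), hGlin u y, map_smul, map_smul]
      simp only [smul_eq_mul]
      ring
    have := dual_sep _ hker
    rwa [sub_eq_zero] at this
  set Glin : X →ₗ[ℝ] X :=
    { toFun := fun y => A0 y 0 - A0 0 0
      map_add' := hGadd
      map_smul' := by intro r y; simpa using hGsmul r y } with hGlin'
  have hgraph : IsClosed (Glin.graph : Set (X × X)) := by
    have heq : (Glin.graph : Set (X × X)) =
        ⋂ u : X →L[ℝ] ℝ, {p : X × X | u p.2 - ((V0 u 0) p.1 - (V0 0 0) p.1) = 0} := by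
      ext p
      simp only [SetLike.mem_coe, LinearMap.mem_graph_iff, mem_iInter, mem_setOf_eq]
      constructor
      · intro h u
        rw [h]
        show u (A0 p.1 0 - A0 0 0) - _ = 0
        rw [hGlin u p.1]; ring
      · intro h
        have hker : ∀ u : X →L[ℝ] ℝ, u (p.2 - (A0 p.1 0 - A0 0 0)) = 0 := by
          intro u
          rw [map_sub, hGlin u p.1]
          have := h u; linarith
        have := dual_sep _ hker
        rw [sub_eq_zero] at this
        exact this
    rw [heq]
    apply isClosed_iInter
    intro u
    apply isClosed_eq
    · exact ((u.continuous.comp continuous_snd).sub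
        (((V0 u 0).continuous.comp continuous_fst).sub ((V0 0 0).continuous.comp continuous_fst)))
    · exact continuous_const
  have hGcont : Continuous (fun y => A0 y 0 - A0 0 0) := by
    have h1 := (ContinuousLinearMap.ofIsClosedGraph hgraph).continuous
    have h2 : ⇑(ContinuousLinearMap.ofIsClosedGraph hgraph) = ⇑Glin :=
      ContinuousLinearMap.coeFn_ofIsClosedGraph hgraph
    rw [h2] at h1
    exact h1
  have hGc : (A0 (A0 0 0) 0 - A0 0 0) = -(A0 0 0) := by
    rw [hAinv 0, zero_sub]
  have hGG : ∀ x, A0 (A0 x 0 - A0 0 0) 0 - A0 0 0 = x := by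
    intro x
    have h1 := hGadd (A0 x 0 - A0 0 0) (A0 0 0)
    have harg : (A0 x 0 - A0 0 0) + A0 0 0 = A0 x 0 := by abel
    rw [harg, hAinv x, hAinv 0] at h1
    -- h1 : x - A0 0 0 = (A0 (A0 x 0 - A0 0 0) 0 - A0 0 0) + (0 - A0 0 0)
    have h3 : A0 (A0 x 0 - A0 0 0) 0 - A0 0 0 = (x - A0 0 0) - ((0:X) - A0 0 0) :=
      eq_sub_iff_add_eq.2 h1.symm
    rw [h3]; abel
  -- the continuous linear equivalence
  set Ee : X ≃ₗ[ℝ] X :=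
    { toFun := fun y => A0 y 0 - A0 0 0
      map_add' := hGadd
      map_smul' := by intro r y; simpa using hGsmul r y
      invFun := fun y => A0 y 0 - A0 0 0
      left_inv := hGG
      right_inv := hGG } with hEe
  set EL : X ≃L[ℝ] X :=
    { Ee with continuous_toFun := hGcont, continuous_invFun := hGcont } with hEL
  -- the master formula for T
  have hTf : ∀ (f : Cl X) (x : X),
      (T f).1 x = f.1 (A0 x 0) + (((V0 0 0) x + M 0 0 : ℝ) : EReal) := by
    intro f x
    have hfor : ∀ (u : X →L[ℝ] ℝ) (α : ℝ), (∀ y, aff u α y ≤ f.1 y) →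
        ∀ y, aff (V0 u 0) (M u α) y ≤ (T f).1 y := by
      intro u α hp
      have h1 : (affCl u α).1 ≤ f.1 := fun y => hp y
      have h2 := hmono _ _ h1
      rw [hTaff u α] at h2
      exact fun y => h2 y
    have hback : ∀ (u : X →L[ℝ] ℝ) (α : ℝ), (∀ y, aff u α y ≤ (T f).1 y) →
        ∀ y, aff (V0 u 0) (M u α) y ≤ f.1 y := by
      intro u α hp
      have h1 : (affCl u α).1 ≤ (T f).1 := fun y => hp y
      have h2 := hmono _ _ h1
      rw [hTaff u α, hinv f] at h2
      exact fun y => h2 y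
    set e : Mino f → Mino (T f) :=
      fun p => ⟨(V0 p.1.1 0, M p.1.1 p.1.2), hfor p.1.1 p.1.2 p.2⟩ with he
    set e' : Mino (T f) → Mino f :=
      fun q => ⟨(V0 q.1.1 0, M q.1.1 q.1.2), hback q.1.1 q.1.2 q.2⟩ with he'
    have hee : ∀ q, e (e' q) = q := by
      intro q
      apply Subtype.ext
      have h1 := haffinv q.1.1 q.1.2
      show (V0 (V0 q.1.1 0) 0, M (V0 q.1.1 0) (M q.1.1 q.1.2)) = q.1
      exact Prod.ext_iff.2 ⟨h1.1, h1.2⟩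
    have hequiv : Function.Surjective e := fun q => ⟨e' q, hee q⟩
    have hterm : ∀ p : Mino f, (((e p).1.1 x + (e p).1.2 : ℝ) : EReal)
        = (((p.1.1 (A0 x 0) + p.1.2) + ((V0 0 0) x + M 0 0) : ℝ) : EReal) := by
      intro p
      apply congrArg
      show (V0 p.1.1 0) x + M p.1.1 p.1.2 = _
      have h1 := hE6 p.1.1 x
      have h2 := hM p.1.1 p.1.2
      rw [hlam1, one_mul] at h2
      rw [h1, h2]; ring
    calc (T f).1 x
        = ⨆ q : Mino (T f), ((q.1.1 x + q.1.2 : ℝ) : EReal) := fm (T f) x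
      _ = ⨆ p : Mino f, (((e p).1.1 x + (e p).1.2 : ℝ) : EReal) :=
          (hequiv.iSup_comp (fun q : Mino (T f) => ((q.1.1 x + q.1.2 : ℝ) : EReal))).symm
      _ = ⨆ p : Mino f, (((p.1.1 (A0 x 0) + p.1.2) + ((V0 0 0) x + M 0 0) : ℝ) : EReal) :=
          iSup_congr hterm
      _ = (⨆ p : Mino f, ((p.1.1 (A0 x 0) + p.1.2 : ℝ) : EReal))
            + (((V0 0 0) x + M 0 0 : ℝ) : EReal) :=
          ereal_iSup_add (fun p : Mino f => p.1.1 (A0 x 0) + p.1.2) ((V0 0 0) x + M 0 0)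
      _ = f.1 (A0 x 0) + (((V0 0 0) x + M 0 0 : ℝ) : EReal) := by rw [← fm f (A0 x 0)]
  -- relations for w and the constant
  have hwrel : ∀ x, (V0 0 0) (A0 x 0) + (V0 0 0) x + 2 * M 0 0 = 0 := by
    intro x
    have h1 := hTf (T (affCl 0 0)) x
    have h2 := hTf (affCl 0 0) (A0 x 0)
    rw [hAinv x] at h2
    rw [h2] at h1
    rw [hinv (affCl 0 0)] at h1
    have h3 : (affCl (0 : X →L[ℝ] ℝ) 0).1 x = ((0:ℝ) : EReal) := by
      show ((((0 : X →L[ℝ] ℝ) x) + 0 : ℝ) : EReal) = _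
      norm_num
    rw [h3] at h1
    rw [← EReal.coe_add, ← EReal.coe_add] at h1
    have h4 : (0:ℝ) = 0 + ((V0 0 0) (A0 x 0) + M 0 0) + ((V0 0 0) x + M 0 0) := by
      exact_mod_cast h1
    linarith
  have hw00 : (V0 0 0) (0:X) = 0 := map_zero _
  have hμc : 2 * M 0 0 = -((V0 0 0) (A0 0 0)) := by
    have := hwrel 0
    rw [hw00] at this
    linarith
  -- conclusion
  refine ⟨A0 0 0, V0 0 0, EL, ?_, ?_, ?_, ?_⟩
  · intro x
    show A0 (A0 x 0 - A0 0 0) 0 - A0 0 0 = x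
    exact hGG x
  · show A0 (A0 0 0) 0 - A0 0 0 = -(A0 0 0)
    exact hGc
  · intro x
    show (V0 0 0) (A0 x 0 - A0 0 0) = -((V0 0 0) x)
    rw [map_sub]
    linarith [hwrel x, hμc]
  · intro f x
    rw [hTf f x]
    have h2 : (EL x : X) + A0 0 0 = A0 x 0 := by
      show (A0 x 0 - A0 0 0) + A0 0 0 = A0 x 0
      abel
    rw [h2]
    have h3 : (V0 0 0) x + M 0 0 = (V0 0 0) x - (V0 0 0) (A0 0 0) / 2 := by
      linarith [hμc]
    rw [h3]

end Forward

/-- An operator on `C(X)` is fully order preserving if it is onto and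
`f ≤ g ↔ T f ≤ T g` (pointwise order). -/
def FullyOrderPreserving [NormedAddCommGroup X] [NormedSpace ℝ X]
    (T : Cl X → Cl X) : Prop :=
  Function.Surjective T ∧ ∀ f g : Cl X, f.1 ≤ g.1 ↔ (T f).1 ≤ (T g).1

theorem order_preserving_involution_characterization
    [NormedAddCommGroup X] [NormedSpace ℝ X] [CompleteSpace X]
    (hdim : 2 ≤ Module.rank ℝ X)
    (T : Cl X → Cl X) :
    ((∀ f g : Cl X, f.1 ≤ g.1 → (T f).1 ≤ (T g).1) ∧ ∀ f : Cl X, T (T f) = f) ↔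
      ∃ (c : X) (w : X →L[ℝ] ℝ) (E : X ≃L[ℝ] X),
        (∀ x, E (E x) = x) ∧ E c = -c ∧ (∀ x, w (E x) = -(w x)) ∧
        ∀ (f : Cl X) (x : X),
          (T f).1 x = f.1 (E x + c) + ((w x - w c / 2 : ℝ) : EReal) := by
  constructor
  · rintro ⟨hmono, hinv⟩
    exact forward_direction hdim T hmono hinv
  · rintro ⟨c, w, E, hEE, hEc, hwE, hT⟩
    constructor
    · intro f g h x
      rw [hT f x, hT g x]
      exact add_le_add_left (h (E x + c)) _
    · intro f
      apply Subtype.ext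
      funext x
      rw [hT (T f) x, hT f (E x + c)]
      have h1 : E (E x + c) + c = x := by
        rw [map_add, hEE x, hEc]; abel
      have h2 : w (E x + c) = -(w x) + w c := by rw [map_add, hwE x]
      rw [h1, h2, add_assoc, ← EReal.coe_add]
      have h3 : (-(w x) + w c - w c / 2 + (w x - w c / 2) : ℝ) = 0 := by ring
      rw [h3, EReal.coe_zero, add_zero]
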